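/- Let G be a compact Hausdorff topological group acting on spaces E and B, and let p : E → B be a G-fibration. Let e ∈ E be a G-fixed point and F = p⁻¹(p(e)) the fibre through e. If F admits a strong G-deformation retraction to the point e, then the fibre Ψ⁻¹(e,e) of the invariant parametrized fibration Ψ is (G×G)-contractible; here Ψ⁻¹(e,e) is (G×G)-homeomorphic to the space 𝓕 = {γ ∈ F^I : γ(1/2) = e and γ(0) = g·γ(1) for some g ∈ G} with the action (g₁,g₂)·γ equal to g₁·γ(t) for t ≤ 1/2 and g₂·γ(t) for t ≥ 1/2. -/

import Mathlib

/-- `p` is a `G`-fibration. -/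
def IsGFibration (G : Type) [Group G] [TopologicalSpace G]
    {E B : Type} [TopologicalSpace E] [TopologicalSpace B]
    [MulAction G E] [MulAction G B] (p : E → B) : Prop :=
  ∀ (X : Type) (_ : TopologicalSpace X) (_ : MulAction G X) (_ : ContinuousSMul G X)
    (H : X × unitInterval → B) (h : X → E),
      Continuous H → (∀ (g : G) (x : X) (t : unitInterval), H (g • x, t) = g • H (x, t)) →
      Continuous h → (∀ (g : G) (x : X), h (g • x) = g • h x) →
      (∀ x : X, p (h x) = H (x, 0)) →
      ∃ Ht : X × unitInterval → E, Continuous Ht ∧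
        (∀ (g : G) (x : X) (t : unitInterval), Ht (g • x, t) = g • Ht (x, t)) ∧
        (∀ (x : X) (t : unitInterval), p (Ht (x, t)) = H (x, t)) ∧
        (∀ x : X, Ht (x, 0) = h x)

/-- The midpoint of the unit interval. -/
noncomputable def half : unitInterval := ⟨1 / 2, by norm_num⟩

/-! ### Auxiliary gluing machinery -/

noncomputable def prI (x : ℝ) : unitInterval := Set.projIcc 0 1 zero_le_one x

lemma continuous_prI : Continuous prI := by unfold prI; exact continuous_projIcc

lemma prI_mem {x : ℝ} (hx : x ∈ Set.Icc (0:ℝ) 1) : prI x = ⟨x, hx⟩ :=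
  Set.projIcc_of_mem _ hx

lemma prI_coe (t : unitInterval) : prI (t : ℝ) = t := by
  rw [prI_mem t.2]

/-- first half reparametrization `t ↦ (1-t)/2`. -/
noncomputable def c₁ : C(unitInterval, unitInterval) :=
  ⟨fun t => prI ((1 - (t:ℝ)) / 2), continuous_prI.comp (by continuity)⟩

/-- second half reparametrization `t ↦ 1 - t/2`. -/
noncomputable def c₂ : C(unitInterval, unitInterval) :=
  ⟨fun t => prI (1 - (t:ℝ) / 2), continuous_prI.comp (by continuity)⟩

/-- glue two paths (reversed) into one. -/
noncomputable def glue {E : Type} [TopologicalSpace E]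
    (a b : C(unitInterval, E)) (t : unitInterval) : E :=
  if (t : ℝ) ≤ 1 / 2 then a (prI (1 - 2 * t)) else b (prI (2 - 2 * t))

lemma glue_continuous {E X : Type} [TopologicalSpace E] [TopologicalSpace X]
    (a b : X → C(unitInterval, E)) (ha : Continuous a) (hb : Continuous b)
    (h : ∀ x, a x 0 = b x 1) :
    Continuous fun q : X × unitInterval => glue (a q.1) (b q.1) q.2 := by
  unfold glue
  apply Continuous.if_le
  · exact continuous_eval.comp
      ((ha.comp continuous_fst).prodMk
        (continuous_prI.comp (by continuity)))
  · exact continuous_eval.comp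
      ((hb.comp continuous_fst).prodMk
        (continuous_prI.comp (by continuity)))
  · exact (continuous_subtype_val.comp continuous_snd)
  · exact continuous_const
  · intro q hq
    have h1 : (1 : ℝ) - 2 * (q.2 : ℝ) = 0 := by rw [hq]; ring
    have h2 : (2 : ℝ) - 2 * (q.2 : ℝ) = 1 := by rw [hq]; ring
    rw [h1, h2]
    have p0 : prI (0:ℝ) = 0 := prI_mem (by norm_num)
    have p1 : prI (1:ℝ) = 1 := prI_mem (by norm_num)
    rw [p0, p1]; exact h q.1

lemma prI_eq (t : unitInterval) {x : ℝ} (hx : x = (t : ℝ)) : prI x = t := by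
  rw [hx]; exact prI_coe t

lemma glue_cont {E : Type} [TopologicalSpace E] (a b : C(unitInterval, E))
    (hab : a 0 = b 1) : Continuous (glue a b) := by
  have h1 := glue_continuous (fun _ : Unit => a) (fun _ => b) continuous_const
    continuous_const (fun _ => hab)
  have h2 : Continuous fun t : unitInterval => (((), t) : Unit × unitInterval) :=
    continuous_const.prodMk continuous_id
  exact h1.comp h2

lemma glue_le {E : Type} [TopologicalSpace E] (a b : C(unitInterval, E))
    {t : unitInterval} (ht : (t : ℝ) ≤ 1 / 2) :
    glue a b t = a (prI (1 - 2 * t)) := if_pos ht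

lemma glue_gt {E : Type} [TopologicalSpace E] (a b : C(unitInterval, E))
    {t : unitInterval} (ht : ¬ (t : ℝ) ≤ 1 / 2) :
    glue a b t = b (prI (2 - 2 * t)) := if_neg ht

lemma glue_half {E : Type} [TopologicalSpace E] (a b : C(unitInterval, E)) :
    glue a b half = a 0 := by
  rw [glue_le a b (by norm_num [half])]
  congr 1
  exact prI_eq 0 (by norm_num [half])

lemma glue_zero {E : Type} [TopologicalSpace E] (a b : C(unitInterval, E)) :
    glue a b 0 = a 1 := by
  rw [glue_le a b (by norm_num)]
  congr 1
  exact prI_eq 1 (by norm_num)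

lemma glue_one {E : Type} [TopologicalSpace E] (a b : C(unitInterval, E)) :
    glue a b 1 = b 0 := by
  rw [glue_gt a b (by norm_num)]
  congr 1
  exact prI_eq 0 (by norm_num)

lemma comp_c₁_glue {E : Type} [TopologicalSpace E] (a b : C(unitInterval, E))
    (t : unitInterval) : glue a b (c₁ t) = a t := by
  have h0 := t.2.1
  have h1 := t.2.2
  have hmem : (1 - (t:ℝ)) / 2 ∈ Set.Icc (0:ℝ) 1 := by constructor <;> nlinarith
  have hc : c₁ t = ⟨(1 - (t:ℝ)) / 2, hmem⟩ := prI_mem hmem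
  rw [hc, glue_le a b (by simpa using by nlinarith : ((⟨(1 - (t:ℝ)) / 2, hmem⟩ : unitInterval) : ℝ) ≤ 1/2)]
  congr 1
  rw [show (1:ℝ) - 2 * ((1 - (t:ℝ)) / 2) = (t:ℝ) by ring]
  exact prI_coe t

lemma comp_c₂_glue {E : Type} [TopologicalSpace E] (a b : C(unitInterval, E))
    (hab : a 0 = b 1) (t : unitInterval) : glue a b (c₂ t) = b t := by
  have h0 := t.2.1
  have h1 := t.2.2
  have hmem : 1 - (t:ℝ) / 2 ∈ Set.Icc (0:ℝ) 1 := by constructor <;> nlinarith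
  have hc : c₂ t = ⟨1 - (t:ℝ) / 2, hmem⟩ := prI_mem hmem
  rw [hc]
  by_cases ht : (1 : ℝ) - (t:ℝ) / 2 ≤ 1 / 2
  · -- then t = 1
    have ht1 : (t : ℝ) = 1 := le_antisymm h1 (by linarith)
    rw [glue_le a b (by simpa using ht)]
    have : (1:ℝ) - 2 * ((1:ℝ) - (t:ℝ) / 2) = 0 := by rw [ht1]; ring
    rw [this, show prI (0:ℝ) = 0 from prI_mem (by norm_num), hab]
    congr 1
    exact Subtype.ext ht1.symm
  · rw [glue_gt a b (by simpa using ht)]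
    congr 1
    rw [show (2:ℝ) - 2 * ((1:ℝ) - (t:ℝ) / 2) = (t:ℝ) by ring]
    exact prI_coe t

lemma glue_comp_c₁ {E : Type} [TopologicalSpace E] (γ : C(unitInterval, E))
    {t : unitInterval} (ht : (t : ℝ) ≤ 1 / 2) :
    (γ.comp c₁) (prI (1 - 2 * t)) = γ t := by
  have h0 := t.2.1
  have hmem : (1:ℝ) - 2 * (t:ℝ) ∈ Set.Icc (0:ℝ) 1 := by constructor <;> nlinarith
  rw [prI_mem hmem]
  show γ (c₁ ⟨(1:ℝ) - 2 * (t:ℝ), hmem⟩) = γ t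
  congr 1
  show prI ((1 - ((1:ℝ) - 2 * (t:ℝ))) / 2) = t
  rw [show (1 - ((1:ℝ) - 2 * (t:ℝ))) / 2 = (t:ℝ) by ring]
  exact prI_coe t

lemma glue_comp_c₂ {E : Type} [TopologicalSpace E] (γ : C(unitInterval, E))
    {t : unitInterval} (ht : ¬ (t : ℝ) ≤ 1 / 2) :
    (γ.comp c₂) (prI (2 - 2 * t)) = γ t := by
  have h1 := t.2.2
  have hmem : (2:ℝ) - 2 * (t:ℝ) ∈ Set.Icc (0:ℝ) 1 := by
    push_neg at ht; constructor <;> nlinarith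
  rw [prI_mem hmem]
  show γ (c₂ ⟨(2:ℝ) - 2 * (t:ℝ), hmem⟩) = γ t
  congr 1
  show prI (1 - ((2:ℝ) - 2 * (t:ℝ)) / 2) = t
  rw [show 1 - ((2:ℝ) - 2 * (t:ℝ)) / 2 = (t:ℝ) by ring]
  exact prI_coe t

theorem invariant_parametrized_fibre_GxG_contractible
    (G : Type) [Group G] [TopologicalSpace G] [IsTopologicalGroup G]
    [CompactSpace G] [T2Space G]
    {E B : Type} [TopologicalSpace E] [TopologicalSpace B]
    [MulAction G E] [ContinuousSMul G E] [MulAction G B] [ContinuousSMul G B]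
    (p : E → B) (hpc : Continuous p)
    (hequiv : ∀ (g : G) (x : E), p (g • x) = g • p x)
    (hfib : IsGFibration G p)
    (e : E) (hefix : ∀ g : G, g • e = e)
    -- a strong `G`-deformation retraction of the fibre `F = p⁻¹(p e)` to `e`
    (Hd : {x : E // p x = p e} × unitInterval → E)
    (hHdc : Continuous Hd)
    (hHdF : ∀ (z : {x : E // p x = p e}) (t : unitInterval), p (Hd (z, t)) = p e)
    (hHd0 : ∀ z : {x : E // p x = p e}, Hd (z, 0) = z.1)
    (hHd1 : ∀ z : {x : E // p x = p e}, Hd (z, 1) = e)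
    (hHde : ∀ t : unitInterval, Hd (⟨e, rfl⟩, t) = e)
    (hHdeq : ∀ (g : G) (z : {x : E // p x = p e}) (t : unitInterval)
      (hz : p (g • z.1) = p e), Hd (⟨g • z.1, hz⟩, t) = g • Hd (z, t)) :
    -- `𝓕` and the fibre of `Ψ` over `(e,e)`
    let Fc : Set C(unitInterval, E) :=
      {γ | (∀ t, p (γ t) = p e) ∧ γ half = e ∧ ∃ g : G, γ 0 = g • γ 1}
    let Fib : Set (C(unitInterval, E) × C(unitInterval, E)) :=
      {x | (∃ b, ∀ t, p (x.1 t) = b) ∧ (∃ b, ∀ t, p (x.2 t) = b) ∧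
        (∃ g : G, x.1 1 = g • x.2 0) ∧ x.1 0 = e ∧ x.2 1 = e}
    -- the fibre is `(G×G)`-homeomorphic to `𝓕`, compatibly with the piecewise action
    (∃ φ : Fib ≃ₜ Fc,
      ∀ (g₁ g₂ : G) (x x' : Fib),
        (∀ t, x'.1.1 t = g₁ • x.1.1 t ∧ x'.1.2 t = g₂ • x.1.2 t) →
        ∀ t : unitInterval,
          (φ x').1 t = if (t : ℝ) ≤ 1 / 2 then g₁ • (φ x).1 t else g₂ • (φ x).1 t) ∧
    -- `𝓕` is `(G×G)`-equivariantly contractible to the constant path at `e`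
    (∃ K : Fc × unitInterval → C(unitInterval, E),
      Continuous K ∧
      (∀ (γ : Fc) (s : unitInterval), K (γ, s) ∈ Fc) ∧
      (∀ γ : Fc, K (γ, 0) = γ.1) ∧
      (∀ (γ : Fc) (t : unitInterval), K (γ, 1) t = e) ∧
      (∀ (g₁ g₂ : G) (γ γ' : Fc),
        (∀ t : unitInterval,
          γ'.1 t = if (t : ℝ) ≤ 1 / 2 then g₁ • γ.1 t else g₂ • γ.1 t) →
        ∀ (s t : unitInterval),
          K (γ', s) t = if (t : ℝ) ≤ 1 / 2 then g₁ • K (γ, s) t else g₂ • K (γ, s) t)) := by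
  intro Fc Fib
  have hpe : ∀ g : G, g • p e = p e := fun g => by rw [← hequiv g e, hefix g]
  have hfibmem : ∀ (g : G) (z : E), p z = p e → p (g • z) = p e := fun g z hz => by
    rw [hequiv, hz, hpe]
  -- unfolded membership facts
  have memFib : ∀ x : Fib, (∀ t, p (x.1.1 t) = p e) ∧ (∀ t, p (x.1.2 t) = p e) ∧
      (∃ g : G, x.1.1 1 = g • x.1.2 0) ∧ x.1.1 0 = e ∧ x.1.2 1 = e := by
    rintro ⟨⟨a, b⟩, ⟨b1, hb1⟩, ⟨b2, hb2⟩, hg, h0, h1⟩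
    have hb1' : b1 = p e := by rw [← hb1 0]; simp only [h0]
    have hb2' : b2 = p e := by rw [← hb2 1]; simp only [h1]
    exact ⟨fun t => (hb1 t).trans hb1', fun t => (hb2 t).trans hb2', hg, h0, h1⟩
  have memFc : ∀ γ : Fc, (∀ t, p (γ.1 t) = p e) ∧ γ.1 half = e ∧
      ∃ g : G, γ.1 0 = g • γ.1 1 := by
    rintro ⟨γ, h1, h2, h3⟩; exact ⟨h1, h2, h3⟩
  constructor
  · -- the homeomorphism
    refine ⟨⟨⟨fun x => ⟨⟨glue x.1.1 x.1.2,
        glue_cont _ _ ((memFib x).2.2.2.1.trans (memFib x).2.2.2.2.symm)⟩, ?_⟩,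
      fun γ => ⟨(γ.1.comp c₁, γ.1.comp c₂), ?_⟩, ?_, ?_⟩, ?_, ?_⟩, ?_⟩
    · -- toFun lands in Fc
      obtain ⟨hp1, hp2, ⟨g, hg⟩, h0, h1⟩ := memFib x
      refine ⟨fun t => ?_, ?_, ⟨g, ?_⟩⟩
      · by_cases ht : (t : ℝ) ≤ 1 / 2
        · rw [show ((⟨glue x.1.1 x.1.2, _⟩ : C(unitInterval, E)) t) = glue x.1.1 x.1.2 t
            from rfl, glue_le _ _ ht]; exact hp1 _
        · rw [show ((⟨glue x.1.1 x.1.2, _⟩ : C(unitInterval, E)) t) = glue x.1.1 x.1.2 t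
            from rfl, glue_gt _ _ ht]; exact hp2 _
      · show glue x.1.1 x.1.2 half = e
        rw [glue_half, h0]
      · show glue x.1.1 x.1.2 0 = g • glue x.1.1 x.1.2 1
        rw [glue_zero, glue_one]; exact hg
    · -- invFun lands in Fib
      obtain ⟨hp, hhalf, ⟨g, hg⟩⟩ := memFc γ
      have hc10 : c₁ 0 = half := by
        show prI ((1 - ((0 : unitInterval) : ℝ)) / 2) = half
        rw [show (1 - ((0 : unitInterval) : ℝ)) / 2 = 1/2 by norm_num]
        exact prI_mem (by norm_num)
      have hc11 : c₁ 1 = 0 := by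
        show prI ((1 - ((1 : unitInterval) : ℝ)) / 2) = 0
        rw [show (1 - ((1 : unitInterval) : ℝ)) / 2 = 0 by norm_num]
        exact prI_mem (by norm_num)
      have hc20 : c₂ 0 = 1 := by
        show prI (1 - ((0 : unitInterval) : ℝ) / 2) = 1
        rw [show 1 - ((0 : unitInterval) : ℝ) / 2 = 1 by norm_num]
        exact prI_mem (by norm_num)
      have hc21 : c₂ 1 = half := by
        show prI (1 - ((1 : unitInterval) : ℝ) / 2) = half
        rw [show 1 - ((1 : unitInterval) : ℝ) / 2 = 1/2 by norm_num]
        exact prI_mem (by norm_num)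
      refine ⟨⟨p e, fun t => hp _⟩, ⟨p e, fun t => hp _⟩, ⟨g, ?_⟩, ?_, ?_⟩
      · show γ.1 (c₁ 1) = g • γ.1 (c₂ 0)
        rw [hc11, hc20]; exact hg
      · show γ.1 (c₁ 0) = e
        rw [hc10]; exact hhalf
      · show γ.1 (c₂ 1) = e
        rw [hc21]; exact hhalf
    · -- left inverse
      intro x
      obtain ⟨hp1, hp2, hg, h0, h1⟩ := memFib x
      apply Subtype.ext
      apply Prod.ext
      · apply ContinuousMap.ext; intro t
        exact comp_c₁_glue x.1.1 x.1.2 t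
      · apply ContinuousMap.ext; intro t
        exact comp_c₂_glue x.1.1 x.1.2 (h0.trans h1.symm) t
    · -- right inverse
      intro γ
      apply Subtype.ext
      apply ContinuousMap.ext; intro t
      show glue (γ.1.comp c₁) (γ.1.comp c₂) t = γ.1 t
      by_cases ht : (t : ℝ) ≤ 1 / 2
      · rw [glue_le _ _ ht]; exact glue_comp_c₁ γ.1 ht
      · rw [glue_gt _ _ ht]; exact glue_comp_c₂ γ.1 ht
    · -- continuity of toFun
      apply Continuous.subtype_mk
      apply ContinuousMap.continuous_of_continuous_uncurry
      exact glue_continuous (fun x : Fib => x.1.1) (fun x : Fib => x.1.2)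
        (continuous_fst.comp continuous_subtype_val)
        (continuous_snd.comp continuous_subtype_val)
        (fun x => (memFib x).2.2.2.1.trans (memFib x).2.2.2.2.symm)
    · -- continuity of invFun
      apply Continuous.subtype_mk
      exact ((ContinuousMap.continuous_precomp c₁).comp continuous_subtype_val).prodMk
        ((ContinuousMap.continuous_precomp c₂).comp continuous_subtype_val)
    · -- equivariance
      intro g₁ g₂ x x' hrel t
      show glue x'.1.1 x'.1.2 t =
        if (t : ℝ) ≤ 1 / 2 then g₁ • glue x.1.1 x.1.2 t else g₂ • glue x.1.1 x.1.2 t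
      by_cases ht : (t : ℝ) ≤ 1 / 2
      · rw [if_pos ht, glue_le _ _ ht, glue_le _ _ ht]
        exact (hrel _).1
      · rw [if_neg ht, glue_gt _ _ ht, glue_gt _ _ ht]
        exact (hrel _).2
  · -- the contraction
    refine ⟨fun q => ⟨fun t => Hd (⟨q.1.1 t, (memFc q.1).1 t⟩, q.2),
        hHdc.comp ((Continuous.subtype_mk (map_continuous q.1.1) _).prodMk
          continuous_const)⟩, ?_, ?_, ?_, ?_, ?_⟩
    · -- continuity of K
      apply ContinuousMap.continuous_of_continuous_uncurry
      apply hHdc.comp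
      apply Continuous.prodMk
      · apply Continuous.subtype_mk
        exact continuous_eval.comp
          ((continuous_subtype_val.comp (continuous_fst.comp continuous_fst)).prodMk
            continuous_snd)
      · exact continuous_snd.comp continuous_fst
    · -- K lands in Fc
      intro γ s
      obtain ⟨hp, hhalf, ⟨g, hg⟩⟩ := memFc γ
      refine ⟨fun t => hHdF _ _, ?_, ⟨g, ?_⟩⟩
      · show Hd (⟨γ.1 half, hp half⟩, s) = e
        rw [show (⟨γ.1 half, hp half⟩ : {x : E // p x = p e}) = ⟨e, rfl⟩ from
          Subtype.ext hhalf]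
        exact hHde s
      · show Hd (⟨γ.1 0, hp 0⟩, s) = g • Hd (⟨γ.1 1, hp 1⟩, s)
        have hz : p (g • (⟨γ.1 1, hp 1⟩ : {x : E // p x = p e}).1) = p e :=
          hfibmem g _ (hp 1)
        rw [show (⟨γ.1 0, hp 0⟩ : {x : E // p x = p e}) =
          ⟨g • (⟨γ.1 1, hp 1⟩ : {x : E // p x = p e}).1, hz⟩ from Subtype.ext hg]
        exact hHdeq g ⟨γ.1 1, hp 1⟩ s hz
    · -- K at 0
      intro γ
      apply ContinuousMap.ext; intro t
      exact hHd0 ⟨γ.1 t, (memFc γ).1 t⟩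
    · -- K at 1
      intro γ t
      exact hHd1 ⟨γ.1 t, (memFc γ).1 t⟩
    · -- equivariance of K
      intro g₁ g₂ γ γ' hrel s t
      show Hd (⟨γ'.1 t, (memFc γ').1 t⟩, s) =
        if (t : ℝ) ≤ 1 / 2 then g₁ • Hd (⟨γ.1 t, (memFc γ).1 t⟩, s)
        else g₂ • Hd (⟨γ.1 t, (memFc γ).1 t⟩, s)
      by_cases ht : (t : ℝ) ≤ 1 / 2
      · rw [if_pos ht]
        have h1 : γ'.1 t = g₁ • γ.1 t := by rw [hrel t, if_pos ht]
        have hz : p (g₁ • (⟨γ.1 t, (memFc γ).1 t⟩ : {x : E // p x = p e}).1) = p e :=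
          hfibmem g₁ _ ((memFc γ).1 t)
        rw [show (⟨γ'.1 t, (memFc γ').1 t⟩ : {x : E // p x = p e}) =
          ⟨g₁ • (⟨γ.1 t, (memFc γ).1 t⟩ : {x : E // p x = p e}).1, hz⟩ from
          Subtype.ext h1]
        exact hHdeq g₁ ⟨γ.1 t, (memFc γ).1 t⟩ s hz
      · rw [if_neg ht]
        have h1 : γ'.1 t = g₂ • γ.1 t := by rw [hrel t, if_neg ht]
        have hz : p (g₂ • (⟨γ.1 t, (memFc γ).1 t⟩ : {x : E // p x = p e}).1) = p e :=
          hfibmem g₂ _ ((memFc γ).1 t)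
        rw [show (⟨γ'.1 t, (memFc γ').1 t⟩ : {x : E // p x = p e}) =
          ⟨g₂ • (⟨γ.1 t, (memFc γ).1 t⟩ : {x : E // p x = p e}).1, hz⟩ from
          Subtype.ext h1]
        exact hHdeq g₂ ⟨γ.1 t, (memFc γ).1 t⟩ s hz
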